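/- Let R = ⨁_{m≥0} R_m be a commutative graded algebra over a field, finitely generated and generated in degree 1 by R₁, and let ν : (⋃_m R_m \ {0}) → ℝ≥0 be a function satisfying ν(x·y) = ν(x) + ν(y) for homogeneous x, y with xy ≠ 0, and ν(x+y) ≥ min(ν(x), ν(y)) whenever x, y, x+y are nonzero homogeneous of the same degree. Define ν_m = inf{ν(x) : x ∈ R_m, x ≠ 0} for m with R_m ≠ 0. Then the limit lim_{m→∞} ν_m/m exists and equals inf_m ν_m/m; moreover if ν takes integer values on R₁ \ {0} then this limit equals ν₁ and in particular is an integer (assuming R_m ≠ 0 for all m ≥ 1). -/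

import Mathlib

open Filter Topology

/-- Abstraction of the rationality argument: `A` is a finitely generated graded algebra
generated in degree `1`, `ν` is a valuation-like function (order of vanishing along a
prime divisor) on homogeneous elements, and `νm m` is the minimal value of `ν` on
nonzero elements of degree `m`.  Then `νm m / m` converges to its infimum, and if `ν`
takes integer values in degree `1` then this limit equals `νm 1`, an integer. -/
theorem stmt_1 {k : Type*} [Field k] {A : Type*} [CommRing A] [Algebra k A]
    (𝒜 : ℕ → Submodule k A) [GradedAlgebra 𝒜]
    (hfg : Algebra.FiniteType k A)
    (hgen : ∀ m : ℕ, 1 ≤ m → 𝒜 m = 𝒜 1 ^ m)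
    (hnz : ∀ m : ℕ, 1 ≤ m → ∃ x ∈ 𝒜 m, x ≠ 0)
    (ν : A → ℝ) (hν0 : ∀ x : A, 0 ≤ ν x)
    (hmul : ∀ (m n : ℕ) (x y : A), x ∈ 𝒜 m → y ∈ 𝒜 n → x * y ≠ 0 →
      ν (x * y) = ν x + ν y)
    (hadd : ∀ (m : ℕ) (x y : A), x ∈ 𝒜 m → y ∈ 𝒜 m → x ≠ 0 → y ≠ 0 → x + y ≠ 0 →
      min (ν x) (ν y) ≤ ν (x + y))
    (νm : ℕ → ℝ)
    (hνm : ∀ m : ℕ, 1 ≤ m → νm m = sInf {r : ℝ | ∃ x ∈ 𝒜 m, x ≠ 0 ∧ ν x = r}) :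
    Tendsto (fun m : ℕ => νm m / m) atTop
        (𝓝 (⨅ m : {m : ℕ // 1 ≤ m}, νm m.1 / (m.1 : ℝ))) ∧
      ((∀ x ∈ 𝒜 1, x ≠ 0 → ∃ z : ℤ, ν x = (z : ℝ)) →
        (⨅ m : {m : ℕ // 1 ≤ m}, νm m.1 / (m.1 : ℝ)) = νm 1 ∧
          ∃ z : ℤ, νm 1 = (z : ℝ)) := by
  classical
  set S : Set ℝ := {r : ℝ | ∃ x ∈ 𝒜 1, x ≠ 0 ∧ ν x = r} with hSdef
  have hSne : S.Nonempty := by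
    obtain ⟨x, hx, hx0⟩ := hnz 1 le_rfl
    exact ⟨ν x, x, hx, hx0, rfl⟩
  have hSbdd : BddBelow S := ⟨0, by rintro r ⟨x, hx, hx0, rfl⟩; exact hν0 x⟩
  set s : ℝ := sInf S with hsdef
  have hνm1 : νm 1 = s := by rw [hνm 1 le_rfl]
  have hsle : ∀ x ∈ 𝒜 1, x ≠ 0 → s ≤ ν x := fun x hx hx0 =>
    csInf_le hSbdd ⟨x, hx, hx0, rfl⟩
  -- powers of degree-one elements
  have hpowmem : ∀ x : A, x ∈ 𝒜 1 → ∀ m : ℕ, x ^ (m + 1) ∈ 𝒜 (m + 1) := by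
    intro x hx m
    induction m with
    | zero => simpa using hx
    | succ n ih =>
      have := SetLike.mul_mem_graded ih hx
      rw [pow_succ]
      exact this
  -- decomposition of graded pieces
  have hdec : ∀ m : ℕ, 𝒜 (m + 2) = 𝒜 (m + 1) * 𝒜 1 := by
    intro m
    rw [hgen (m + 2) (by omega), hgen (m + 1) (by omega), pow_succ]
  -- lower bound : every nonzero element of degree m+1 has ν ≥ (m+1) s
  have low : ∀ m : ℕ, ∀ f ∈ 𝒜 (m + 1), f ≠ 0 → ((m : ℝ) + 1) * s ≤ ν f := by
    intro m
    induction m with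
    | zero =>
      intro f hf hf0
      simpa using hsle f hf hf0
    | succ n ih =>
      intro f hf hf0
      rw [hdec n] at hf
      have key : f ∈ 𝒜 (n + 2) ∧ (f ≠ 0 → ((n : ℝ) + 2) * s ≤ ν f) := by
        refine Submodule.mul_induction_on hf ?_ ?_
        · intro a ha b hb
          refine ⟨by simpa using SetLike.mul_mem_graded ha hb, ?_⟩
          intro hab0
          have ha0 : a ≠ 0 := by rintro rfl; simp at hab0
          have hb0 : b ≠ 0 := by rintro rfl; simp at hab0
          have hval := hmul (n + 1) 1 a b ha hb hab0
          have h1 := ih a ha ha0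
          have h2 := hsle b hb hb0
          rw [hval]
          linarith
        · intro x y hx hy
          refine ⟨Submodule.add_mem _ hx.1 hy.1, ?_⟩
          intro hxy0
          by_cases hx0 : x = 0
          · subst hx0
            simpa using hy.2 (by simpa using hxy0)
          by_cases hy0 : y = 0
          · subst hy0
            simpa using hx.2 (by simpa using hxy0)
          have := hadd (n + 2) x y hx.1 hy.1 hx0 hy0 hxy0
          exact le_trans (le_min (hx.2 hx0) (hy.2 hy0)) this
      have := key.2 hf0
      push_cast
      linarith
  -- Noetherian
  haveI : Algebra.FiniteType k A := hfg
  haveI : IsNoetherianRing A := Algebra.FiniteType.isNoetherianRing k A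
  have hnontriv : Nontrivial A := by
    obtain ⟨x, _, hx0⟩ := hnz 1 le_rfl
    exact nontrivial_of_ne x 0 hx0
  -- there exists a non-nilpotent element of degree 1
  have hu : ∃ u ∈ 𝒜 1, ¬ IsNilpotent u := by
    by_contra h
    push_neg at h
    obtain ⟨N, hN⟩ := IsNoetherianRing.isNilpotent_nilradical A
    have mem : ∀ m : ℕ, ∀ f ∈ 𝒜 (m + 1), f ∈ (nilradical A) ^ (m + 1) := by
      intro m
      induction m with
      | zero =>
        intro f hf
        simpa using mem_nilradical.mpr (h f hf)
      | succ n ih =>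
        intro f hf
        rw [hdec n] at hf
        refine Submodule.mul_induction_on hf ?_ (fun x y hx hy => Ideal.add_mem _ hx hy)
        intro a ha b hb
        rw [pow_succ]
        exact Ideal.mul_mem_mul (ih a ha) (mem_nilradical.mpr (h b hb))
    rw [Ideal.zero_eq_bot] at hN
    cases N with
    | zero =>
      rw [pow_zero, Ideal.one_eq_top] at hN
      have h1 : (1 : A) ∈ (⊤ : Ideal A) := trivial
      rw [hN] at h1
      exact one_ne_zero ((Ideal.mem_bot).mp h1)
    | succ M =>
      obtain ⟨f, hf, hf0⟩ := hnz (M + 1) (by omega)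
      have := mem M f hf
      rw [hN] at this
      exact hf0 ((Ideal.mem_bot).mp this)
  obtain ⟨u, hu1, hun⟩ := hu
  have hu0 : u ≠ 0 := fun h => hun (h ▸ IsNilpotent.zero)
  -- the infimum over non-nilpotent elements equals s
  set G : Set ℝ := {r : ℝ | ∃ x ∈ 𝒜 1, x ≠ 0 ∧ ¬ IsNilpotent x ∧ ν x = r} with hGdef
  have hGne : G.Nonempty := ⟨ν u, u, hu1, hu0, hun, rfl⟩
  have hGbdd : BddBelow G := ⟨0, by rintro r ⟨x, hx, hx0, hxn, rfl⟩; exact hν0 x⟩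
  have hGsub : G ⊆ S := by rintro r ⟨x, hx, hx0, _, rfl⟩; exact ⟨x, hx, hx0, rfl⟩
  have hs'le : ∀ r ∈ S, sInf G ≤ r := by
    rintro r ⟨x, hx, hx0, rfl⟩
    by_cases hxn : IsNilpotent x
    · have h1 : ¬ IsNilpotent (u + x) := by
        intro hnil
        apply hun
        have hrw : u = (u + x) + (-x) := by ring
        rw [hrw]
        exact Commute.isNilpotent_add (Commute.all _ _) hnil hxn.neg
      have h2 : u + x ≠ 0 := fun h => h1 (h ▸ IsNilpotent.zero)
      have hmem : u + x ∈ 𝒜 1 := Submodule.add_mem _ hu1 hx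
      have h3 : ¬ IsNilpotent (-u) := fun h => hun (by simpa using h.neg)
      have h4 : (-u : A) ≠ 0 := by simpa using hu0
      have hmem2 : (-u : A) ∈ 𝒜 1 := Submodule.neg_mem _ hu1
      have hx' : (u + x) + (-u) = x := by ring
      have hmin := hadd 1 (u + x) (-u) hmem hmem2 h2 h4 (by rw [hx']; exact hx0)
      rw [hx'] at hmin
      have g1 : sInf G ≤ ν (u + x) := csInf_le hGbdd ⟨u + x, hmem, h2, h1, rfl⟩
      have g2 : sInf G ≤ ν (-u) := csInf_le hGbdd ⟨-u, hmem2, h4, h3, rfl⟩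
      exact le_trans (le_min g1 g2) hmin
    · exact csInf_le hGbdd ⟨x, hx, hx0, hxn, rfl⟩
  have hs'eq : sInf G = s := le_antisymm (le_csInf hSne hs'le) (csInf_le_csInf hSbdd hGne hGsub)
  -- for every ε > 0 there is a small non-nilpotent degree-1 element
  have hex : ∀ ε : ℝ, 0 < ε → ∃ x, x ∈ 𝒜 1 ∧ x ≠ 0 ∧ ¬ IsNilpotent x ∧ ν x < s + ε := by
    intro ε hε
    have hlt : sInf G < s + ε := by rw [hs'eq]; linarith
    obtain ⟨r, hrG, hr⟩ := exists_lt_of_csInf_lt hGne hlt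
    obtain ⟨x, hx, hx0, hxn, rfl⟩ := hrG
    exact ⟨x, hx, hx0, hxn, hr⟩
  -- ν on powers
  have hpowval : ∀ x, x ∈ 𝒜 1 → ¬ IsNilpotent x → ∀ m : ℕ,
      ν (x ^ (m + 1)) = ((m : ℝ) + 1) * ν x := by
    intro x hx hxn m
    induction m with
    | zero => simp
    | succ n ih =>
      have hne : x ^ (n + 1) * x ≠ 0 := by
        rw [← pow_succ]
        exact fun h => hxn ⟨n + 2, h⟩
      have hval := hmul (n + 1) 1 (x ^ (n + 1)) x (hpowmem x hx n) hx hne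
      rw [pow_succ, hval, ih]
      push_cast
      ring
  -- νm m = m * s
  have hνmm : ∀ m : ℕ, 1 ≤ m → νm m = (m : ℝ) * s := by
    intro m hm
    obtain ⟨m, rfl⟩ : ∃ n, m = n + 1 := ⟨m - 1, by omega⟩
    rw [hνm _ hm]
    have hbdd : BddBelow {r : ℝ | ∃ x ∈ 𝒜 (m + 1), x ≠ 0 ∧ ν x = r} :=
      ⟨0, by rintro r ⟨y, hy, hy0, rfl⟩; exact hν0 y⟩
    apply le_antisymm
    · apply le_of_forall_pos_le_add
      intro ε hε
      have hm1 : (0 : ℝ) < (m : ℝ) + 1 := by positivity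
      obtain ⟨x, hx, hx0, hxn, hxv⟩ := hex (ε / ((m : ℝ) + 1)) (by positivity)
      have hxm0 : x ^ (m + 1) ≠ 0 := fun h => hxn ⟨m + 1, h⟩
      have hle : sInf {r : ℝ | ∃ x ∈ 𝒜 (m + 1), x ≠ 0 ∧ ν x = r} ≤ ν (x ^ (m + 1)) :=
        csInf_le hbdd ⟨x ^ (m + 1), hpowmem x hx m, hxm0, rfl⟩
      rw [hpowval x hx hxn m] at hle
      have hkey : ((m : ℝ) + 1) * ν x ≤ ((m : ℝ) + 1) * (s + ε / ((m : ℝ) + 1)) := by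
        nlinarith
      have hfin : ((m : ℝ) + 1) * (s + ε / ((m : ℝ) + 1)) = ((m : ℝ) + 1) * s + ε := by
        field_simp
      push_cast
      linarith
    · apply le_csInf
      · obtain ⟨f, hf, hf0⟩ := hnz (m + 1) (by omega)
        exact ⟨ν f, f, hf, hf0, rfl⟩
      · rintro r ⟨f, hf, hf0, rfl⟩
        have := low m f hf hf0
        push_cast
        linarith
  haveI : Nonempty {m : ℕ // 1 ≤ m} := ⟨⟨1, le_rfl⟩⟩
  have hconst : ∀ m : ℕ, 1 ≤ m → νm m / (m : ℝ) = s := by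
    intro m hm
    have hm0 : (m : ℝ) ≠ 0 := Nat.cast_ne_zero.mpr (by omega)
    rw [hνmm m hm]
    field_simp
  have hinf : (⨅ m : {m : ℕ // 1 ≤ m}, νm m.1 / (m.1 : ℝ)) = s := by
    rw [iInf_congr (fun m : {m : ℕ // 1 ≤ m} => hconst m.1 m.2)]
    exact ciInf_const
  constructor
  · rw [hinf]
    apply Tendsto.congr' _ tendsto_const_nhds
    filter_upwards [eventually_ge_atTop 1] with m hm
    exact (hconst m hm).symm
  · intro hint
    refine ⟨by rw [hinf, hνm1], ?_⟩
    set T : Set ℕ := {n : ℕ | ∃ x ∈ 𝒜 1, x ≠ 0 ∧ ν x = (n : ℝ)} with hTdef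
    have hTne : T.Nonempty := by
      obtain ⟨x, hx, hx0⟩ := hnz 1 le_rfl
      obtain ⟨z, hz⟩ := hint x hx hx0
      have hz0 : (0 : ℝ) ≤ (z : ℝ) := hz ▸ hν0 x
      have hz0' : 0 ≤ z := by exact_mod_cast hz0
      refine ⟨z.toNat, x, hx, hx0, ?_⟩
      rw [hz]
      exact_mod_cast (congrArg Int.cast (Int.toNat_of_nonneg hz0')).symm
    refine ⟨(sInf T : ℕ), ?_⟩
    rw [hνm1]
    apply le_antisymm
    · obtain ⟨x, hx, hx0, hxv⟩ := Nat.sInf_mem hTne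
      have := csInf_le hSbdd ⟨x, hx, hx0, hxv⟩
      exact_mod_cast this
    · apply le_csInf hSne
      rintro r ⟨x, hx, hx0, rfl⟩
      obtain ⟨z, hz⟩ := hint x hx hx0
      have hz0 : (0 : ℝ) ≤ (z : ℝ) := hz ▸ hν0 x
      have hz0' : 0 ≤ z := by exact_mod_cast hz0
      have hmemT : z.toNat ∈ T := ⟨x, hx, hx0, by
        rw [hz]; exact_mod_cast (congrArg Int.cast (Int.toNat_of_nonneg hz0')).symm⟩
      have hle := Nat.sInf_le hmemT
      rw [hz]
      have : ((sInf T : ℕ) : ℝ) ≤ ((z.toNat : ℕ) : ℝ) := by exact_mod_cast hle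
      have heq : ((z.toNat : ℕ) : ℝ) = (z : ℝ) := by exact_mod_cast Int.toNat_of_nonneg hz0'
      push_cast at this ⊢
      linarith [heq ▸ this]
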